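/- For q₁, q₂ in the quaternionic unit disc Δ_ℍ = {q ∈ ℍ : |q| < 1}, set ρ(q₁,q₂) = |q₁ − q₂|·|1 − conj(q₁)·q₂|⁻¹ and δ(q₁,q₂) = (1/2)·log((1 + ρ(q₁,q₂))/(1 − ρ(q₁,q₂))). Then δ is a distance on Δ_ℍ: for all q₁, q₂, q₃ ∈ Δ_ℍ one has ρ(q₁,q₂) < 1, δ(q₁,q₂) ≥ 0, δ(q₁,q₂) = 0 if and only if q₁ = q₂, δ(q₁,q₂) = δ(q₂,q₁), and δ(q₁,q₂) ≤ δ(q₁,q₃) + δ(q₃,q₂). -/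

import Mathlib

open scoped Quaternion

/-- The pseudo-hyperbolic ratio on the quaternionic unit disc. -/
noncomputable def rhoH (q₁ q₂ : ℍ[ℝ]) : ℝ := ‖q₁ - q₂‖ * ‖1 - star q₁ * q₂‖⁻¹

/-- The quaternionic Poincaré distance on the unit disc. -/
noncomputable def deltaH (q₁ q₂ : ℍ[ℝ]) : ℝ :=
  (1 / 2) * Real.log ((1 + rhoH q₁ q₂) / (1 - rhoH q₁ q₂))

namespace DeltaHAux

open Quaternion

lemma nsq (a : ℍ[ℝ]) : ‖a‖ ^ 2 = normSq a := by
  rw [sq, ← normSq_eq_norm_mul_self]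

lemma norm_eq_of_normSq_eq {x y : ℍ[ℝ]} (h : normSq x = normSq y) : ‖x‖ = ‖y‖ := by
  have hx := nsq x; have hy := nsq y
  nlinarith [norm_nonneg x, norm_nonneg y]

lemma one_sub_ne {p : ℍ[ℝ]} (h : ‖p‖ < 1) : (1 : ℍ[ℝ]) - p ≠ 0 := by
  intro h0
  have : (1 : ℍ[ℝ]) = p := by linear_combination (norm := noncomm_ring) h0
  rw [← this] at h; simp at h

lemma denom_ne {a b : ℍ[ℝ]} (ha : ‖a‖ < 1) (hb : ‖b‖ < 1) :
    (1 : ℍ[ℝ]) - star a * b ≠ 0 := by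
  apply one_sub_ne
  rw [norm_mul, norm_star]
  nlinarith [norm_nonneg a, norm_nonneg b]

lemma denom_pos {a b : ℍ[ℝ]} (ha : ‖a‖ < 1) (hb : ‖b‖ < 1) :
    0 < ‖(1 : ℍ[ℝ]) - star a * b‖ :=
  norm_pos_iff.mpr (denom_ne ha hb)

lemma key1 (a b : ℍ[ℝ]) :
    normSq (1 - star a * b) = (1 - normSq a) * (1 - normSq b) + normSq (a - b) := by
  simp only [normSq_def', Quaternion.re_sub, Quaternion.imI_sub, Quaternion.imJ_sub,
    Quaternion.imK_sub, Quaternion.re_one, Quaternion.imI_one, Quaternion.imJ_one,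
    Quaternion.imK_one, Quaternion.re_mul, Quaternion.imI_mul, Quaternion.imJ_mul,
    Quaternion.imK_mul, Quaternion.re_star, Quaternion.imI_star, Quaternion.imJ_star,
    Quaternion.imK_star]
  ring

lemma key2 (a b : ℍ[ℝ]) :
    normSq (1 - star a * b) = 1 - 2 * (star a * b).re + normSq a * normSq b := by
  simp only [normSq_def', Quaternion.re_sub, Quaternion.imI_sub, Quaternion.imJ_sub,
    Quaternion.imK_sub, Quaternion.re_one, Quaternion.imI_one, Quaternion.imJ_one,
    Quaternion.imK_one, Quaternion.re_mul, Quaternion.imI_mul, Quaternion.imJ_mul,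
    Quaternion.imK_mul, Quaternion.re_star, Quaternion.imI_star, Quaternion.imJ_star,
    Quaternion.imK_star]
  ring

lemma key3 (a b : ℍ[ℝ]) :
    normSq (a - b) = normSq a - 2 * (star a * b).re + normSq b := by
  simp only [normSq_def', Quaternion.re_sub, Quaternion.imI_sub, Quaternion.imJ_sub,
    Quaternion.imK_sub, Quaternion.re_mul, Quaternion.re_star, Quaternion.imI_star,
    Quaternion.imJ_star, Quaternion.imK_star]
  ring

lemma key4 (p q : ℍ[ℝ]) : normSq (1 - p * q) = normSq (1 - q * p) := by
  simp only [normSq_def', Quaternion.re_sub, Quaternion.imI_sub, Quaternion.imJ_sub,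
    Quaternion.imK_sub, Quaternion.re_one, Quaternion.imI_one, Quaternion.imJ_one,
    Quaternion.imK_one, Quaternion.re_mul, Quaternion.imI_mul, Quaternion.imJ_mul,
    Quaternion.imK_mul]
  ring

lemma re_sq_le_normSq (q : ℍ[ℝ]) : q.re ^ 2 ≤ normSq q := by
  rw [normSq_def']; nlinarith [sq_nonneg q.imI, sq_nonneg q.imJ, sq_nonneg q.imK]

lemma neg_norm_le_re (q : ℍ[ℝ]) : -‖q‖ ≤ q.re := by
  have h := re_sq_le_normSq q
  rw [← nsq q] at h
  nlinarith [norm_nonneg q]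

lemma swap_lemma (p q : ℍ[ℝ]) : (1 - p * star q) * (p - q) = (p - q) * (1 - star q * p) := by
  ext <;>
    simp only [Quaternion.re_sub, Quaternion.imI_sub, Quaternion.imJ_sub, Quaternion.imK_sub,
      Quaternion.re_one, Quaternion.imI_one, Quaternion.imJ_one, Quaternion.imK_one,
      Quaternion.re_mul, Quaternion.imI_mul, Quaternion.imJ_mul, Quaternion.imK_mul,
      Quaternion.re_star, Quaternion.imI_star, Quaternion.imJ_star, Quaternion.imK_star] <;>
    ring

lemma claim1core (a b c : ℍ[ℝ]) :
    (a - c) * (1 - star c * b) - (1 - a * star c) * (b - c)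
      = ((1 - normSq c : ℝ) : ℍ[ℝ]) * (a - b) := by
  ext <;>
    simp only [Quaternion.re_sub, Quaternion.imI_sub, Quaternion.imJ_sub, Quaternion.imK_sub,
      Quaternion.re_one, Quaternion.imI_one, Quaternion.imJ_one, Quaternion.imK_one,
      Quaternion.re_mul, Quaternion.imI_mul, Quaternion.imJ_mul, Quaternion.imK_mul,
      Quaternion.re_star, Quaternion.imI_star, Quaternion.imJ_star, Quaternion.imK_star,
      Quaternion.re_coe, Quaternion.imI_coe, Quaternion.imJ_coe, Quaternion.imK_coe,
      Quaternion.normSq_def'] <;>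
    ring

lemma claim2core (a b c : ℍ[ℝ]) :
    (1 - star a * c) * (1 - star c * b) - (star a - star c) * (b - c)
      = ((1 - normSq c : ℝ) : ℍ[ℝ]) * (1 - star a * b) := by
  ext <;>
    simp only [Quaternion.re_sub, Quaternion.imI_sub, Quaternion.imJ_sub, Quaternion.imK_sub,
      Quaternion.re_one, Quaternion.imI_one, Quaternion.imJ_one, Quaternion.imK_one,
      Quaternion.re_mul, Quaternion.imI_mul, Quaternion.imJ_mul, Quaternion.imK_mul,
      Quaternion.re_star, Quaternion.imI_star, Quaternion.imJ_star, Quaternion.imK_star,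
      Quaternion.re_coe, Quaternion.imI_coe, Quaternion.imJ_coe, Quaternion.imK_coe,
      Quaternion.normSq_def'] <;>
    ring

lemma rho_nonneg (a b : ℍ[ℝ]) : 0 ≤ rhoH a b :=
  mul_nonneg (norm_nonneg _) (inv_nonneg.mpr (norm_nonneg _))

lemma rho_symm (a b : ℍ[ℝ]) : rhoH a b = rhoH b a := by
  unfold rhoH
  rw [norm_sub_rev]
  congr 2
  rw [← norm_star]
  congr 1
  simp [star_sub, star_mul]

lemma norm_sub_lt {a b : ℍ[ℝ]} (ha : ‖a‖ < 1) (hb : ‖b‖ < 1) :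
    ‖a - b‖ < ‖(1 : ℍ[ℝ]) - star a * b‖ := by
  have h := key1 a b
  rw [← nsq, ← nsq, ← nsq, ← nsq] at h
  have h1 : 0 < 1 - ‖a‖ ^ 2 := by nlinarith [norm_nonneg a]
  have h2 : 0 < 1 - ‖b‖ ^ 2 := by nlinarith [norm_nonneg b]
  nlinarith [mul_pos h1 h2, norm_nonneg (a - b),
    norm_nonneg ((1 : ℍ[ℝ]) - star a * b)]

lemma rho_lt_one {a b : ℍ[ℝ]} (ha : ‖a‖ < 1) (hb : ‖b‖ < 1) : rhoH a b < 1 := by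
  have hd := denom_pos ha hb
  have h := norm_sub_lt ha hb
  rw [rhoH, mul_inv_lt_iff₀ hd]
  simpa using h

lemma key_ineq {A B : ℍ[ℝ]} (hA : ‖A‖ < 1) (hB : ‖B‖ < 1) :
    ‖A - B‖ * ‖(1:ℍ[ℝ]) - star A * B‖⁻¹ ≤ (‖A‖ + ‖B‖) / (1 + ‖A‖ * ‖B‖) := by
  set x := ‖A‖ with hx
  set y := ‖B‖ with hy
  have hx0 : 0 ≤ x := norm_nonneg A
  have hy0 : 0 ≤ y := norm_nonneg B
  set s := (star A * B).re with hs
  have hsle : -(x * y) ≤ s := by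
    have := neg_norm_le_re (star A * B)
    rwa [norm_mul, norm_star] at this
  have h2 : ‖(1:ℍ[ℝ]) - star A * B‖ ^ 2 = 1 - 2 * s + x ^ 2 * y ^ 2 := by
    rw [nsq, key2, ← hs, ← nsq, ← nsq]
  have h3 : ‖A - B‖ ^ 2 = x ^ 2 - 2 * s + y ^ 2 := by
    rw [nsq, key3, ← hs, ← nsq, ← nsq]
  have hdpos : 0 < ‖(1:ℍ[ℝ]) - star A * B‖ := by
    apply norm_pos_iff.mpr
    apply one_sub_ne
    rw [norm_mul, norm_star, ← hx, ← hy]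
    nlinarith
  have hmain : ‖A - B‖ * (1 + x * y) ≤ (x + y) * ‖(1:ℍ[ℝ]) - star A * B‖ := by
    have hfac : 0 ≤ (1 - x) * (1 - y) * ((1 + x) * (1 + y)) * (s + x * y) := by
      have h1' : (0:ℝ) ≤ 1 - x := by linarith
      have h2' : (0:ℝ) ≤ 1 - y := by linarith
      have h3' : (0:ℝ) ≤ 1 + x := by linarith
      have h4' : (0:ℝ) ≤ 1 + y := by linarith
      have h5' : (0:ℝ) ≤ s + x * y := by linarith
      exact mul_nonneg (mul_nonneg (mul_nonneg h1' h2') (mul_nonneg h3' h4')) h5'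
    have hL : 0 ≤ ‖A - B‖ * (1 + x * y) := by
      apply mul_nonneg (norm_nonneg _); nlinarith
    have hR : 0 ≤ (x + y) * ‖(1:ℍ[ℝ]) - star A * B‖ := by
      apply mul_nonneg (by linarith) hdpos.le
    have hsq : (‖A - B‖ * (1 + x * y)) ^ 2 ≤ ((x + y) * ‖(1:ℍ[ℝ]) - star A * B‖) ^ 2 := by
      nlinarith [hfac, h2, h3]
    nlinarith [hsq, hL, hR]
  have hden : (0:ℝ) < 1 + x * y := by nlinarith
  rw [← div_eq_mul_inv, div_le_div_iff₀ hdpos hden]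
  linarith [hmain]

lemma mobius_invariance {a b c : ℍ[ℝ]} (ha : ‖a‖ < 1) (hb : ‖b‖ < 1) (hc : ‖c‖ < 1) :
    rhoH a b = rhoH ((a - c) * (1 - star c * a)⁻¹) ((b - c) * (1 - star c * b)⁻¹) := by
  set u₁ : ℍ[ℝ] := 1 - star c * a with hu₁def
  set u₂ : ℍ[ℝ] := 1 - star c * b with hu₂def
  set w : ℍ[ℝ] := 1 - a * star c with hwdef
  set v : ℍ[ℝ] := 1 - star a * c with hvdef
  have hu₁ : u₁ ≠ 0 := denom_ne hc ha
  have hu₂ : u₂ ≠ 0 := denom_ne hc hb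
  have hw : w ≠ 0 := by
    apply one_sub_ne; rw [norm_mul, norm_star]
    nlinarith [norm_nonneg a, norm_nonneg c]
  have hv : v ≠ 0 := by
    apply one_sub_ne; rw [norm_mul, norm_star]
    nlinarith [norm_nonneg a, norm_nonneg c]
  set A : ℍ[ℝ] := (a - c) * u₁⁻¹ with hAdef
  set B : ℍ[ℝ] := (b - c) * u₂⁻¹ with hBdef
  have hwA : w * A = a - c := by
    rw [hAdef, ← mul_assoc, hwdef, hu₁def, swap_lemma a c, mul_assoc,
      mul_inv_cancel₀ hu₁, mul_one]
  have hBu : B * u₂ = b - c := by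
    rw [hBdef, mul_assoc, inv_mul_cancel₀ hu₂, mul_one]
  have hk : (0:ℝ) < 1 - normSq c := by
    rw [← nsq]; nlinarith [norm_nonneg c]
  have h1 : w * (A - B) * u₂ = ((1 - normSq c : ℝ) : ℍ[ℝ]) * (a - b) := by
    have hexp : w * (A - B) * u₂ = (w * A) * u₂ - w * (B * u₂) := by noncomm_ring
    rw [hexp, hwA, hBu, hu₂def, hwdef]
    exact claim1core a b c
  have hsA : v * star A = star a - star c := by
    have h : star A = (star u₁)⁻¹ * (star a - star c) := by
      rw [hAdef]; simp only [star_mul, star_inv₀, star_sub]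
    have hstu : star u₁ = v := by
      rw [hu₁def, hvdef, star_sub, star_one, star_mul, star_star]
    rw [h, hstu, ← mul_assoc, mul_inv_cancel₀ hv, one_mul]
  have h2 : v * (1 - star A * B) * u₂ = ((1 - normSq c : ℝ) : ℍ[ℝ]) * (1 - star a * b) := by
    have hexp : v * (1 - star A * B) * u₂ = v * u₂ - (v * star A) * (B * u₂) := by noncomm_ring
    rw [hexp, hsA, hBu, hvdef, hu₂def]
    exact claim2core a b c
  have hwv : ‖w‖ = ‖v‖ := by
    apply norm_eq_of_normSq_eq
    rw [hwdef, hvdef, key4 a (star c)]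
    have : (1:ℍ[ℝ]) - star a * c = star (1 - star c * a) := by
      rw [star_sub, star_one, star_mul, star_star]
    rw [this, normSq_star]
  have e1 : ‖w‖ * ‖A - B‖ * ‖u₂‖ = (1 - normSq c) * ‖a - b‖ := by
    have := congrArg norm h1
    rwa [norm_mul, norm_mul, norm_mul, Quaternion.norm_coe, Real.norm_eq_abs,
      abs_of_pos hk] at this
  have e2 : ‖v‖ * ‖1 - star A * B‖ * ‖u₂‖ = (1 - normSq c) * ‖1 - star a * b‖ := by
    have := congrArg norm h2
    rwa [norm_mul, norm_mul, norm_mul, Quaternion.norm_coe, Real.norm_eq_abs,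
      abs_of_pos hk] at this
  have hwpos : 0 < ‖w‖ := norm_pos_iff.mpr hw
  have hvpos : 0 < ‖v‖ := norm_pos_iff.mpr hv
  have hu₂pos : 0 < ‖u₂‖ := norm_pos_iff.mpr hu₂
  have hdpos : 0 < ‖(1:ℍ[ℝ]) - star a * b‖ := denom_pos ha hb
  have hDpos : 0 < ‖(1:ℍ[ℝ]) - star A * B‖ := by
    have h0 : 0 < ‖v‖ * ‖1 - star A * B‖ * ‖u₂‖ := by rw [e2]; positivity
    nlinarith [norm_nonneg ((1:ℍ[ℝ]) - star A * B), mul_pos hvpos hu₂pos]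
  have f1 : ‖A - B‖ = (1 - normSq c) * ‖a - b‖ / (‖v‖ * ‖u₂‖) := by
    rw [eq_div_iff (by positivity)]
    rw [← hwv]
    linear_combination e1
  have f2 : ‖(1:ℍ[ℝ]) - star A * B‖ = (1 - normSq c) * ‖1 - star a * b‖ / (‖v‖ * ‖u₂‖) := by
    rw [eq_div_iff (by positivity)]
    linear_combination e2
  show ‖a - b‖ * ‖1 - star a * b‖⁻¹ = ‖A - B‖ * ‖1 - star A * B‖⁻¹
  rw [f1, f2]
  rw [← div_eq_mul_inv, ← div_eq_mul_inv]
  have hne1 : (1 - normSq c) ≠ 0 := by linarith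
  have hne2 : ‖v‖ * ‖u₂‖ ≠ 0 := by positivity
  field_simp

end DeltaHAux

/-- The quaternionic Poincaré distance is a distance on the unit disc `Δ_ℍ`. -/
theorem deltaH_is_distance :
    ∀ q₁ ∈ {q : ℍ[ℝ] | ‖q‖ < 1}, ∀ q₂ ∈ {q : ℍ[ℝ] | ‖q‖ < 1},
      ∀ q₃ ∈ {q : ℍ[ℝ] | ‖q‖ < 1},
    rhoH q₁ q₂ < 1 ∧
    0 ≤ deltaH q₁ q₂ ∧
    (deltaH q₁ q₂ = 0 ↔ q₁ = q₂) ∧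
    deltaH q₁ q₂ = deltaH q₂ q₁ ∧
    deltaH q₁ q₂ ≤ deltaH q₁ q₃ + deltaH q₃ q₂ := by
  intro q₁ h₁ q₂ h₂ q₃ h₃
  rw [Set.mem_setOf_eq] at h₁ h₂ h₃
  open DeltaHAux in
  have hr0 : 0 ≤ rhoH q₁ q₂ := rho_nonneg q₁ q₂
  have hr1 : rhoH q₁ q₂ < 1 := DeltaHAux.rho_lt_one h₁ h₂
  refine ⟨hr1, ?_, ?_, ?_, ?_⟩
  · -- nonnegativity
    apply mul_nonneg (by norm_num)
    apply Real.log_nonneg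
    rw [le_div_iff₀ (by linarith)]
    linarith
  · -- zero iff equal
    constructor
    · intro h
      by_contra hne
      have hpos : 0 < rhoH q₁ q₂ := by
        rcases lt_or_eq_of_le hr0 with h' | h'
        · exact h'
        · exfalso
          apply hne
          have hd := DeltaHAux.denom_pos h₁ h₂
          have : ‖q₁ - q₂‖ = 0 := by
            by_contra hnn
            have : 0 < ‖q₁ - q₂‖ := lt_of_le_of_ne (norm_nonneg _) (Ne.symm hnn)
            have : 0 < rhoH q₁ q₂ := mul_pos this (inv_pos.mpr hd)
            linarith
          exact sub_eq_zero.mp (norm_eq_zero.mp this)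
      have hlog : 0 < Real.log ((1 + rhoH q₁ q₂) / (1 - rhoH q₁ q₂)) := by
        apply Real.log_pos
        rw [lt_div_iff₀ (by linarith)]
        linarith
      have : 0 < deltaH q₁ q₂ := by
        unfold deltaH; positivity
      linarith [h, this]
    · intro h
      subst h
      unfold deltaH rhoH
      simp
  · -- symmetry
    unfold deltaH
    rw [DeltaHAux.rho_symm]
  · -- triangle inequality
    set r := rhoH q₁ q₂ with hrdef
    set x := rhoH q₁ q₃ with hxdef
    set y := rhoH q₃ q₂ with hydef
    have hx0 : 0 ≤ x := rho_nonneg q₁ q₃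
    have hy0 : 0 ≤ y := rho_nonneg q₃ q₂
    have hx1 : x < 1 := DeltaHAux.rho_lt_one h₁ h₃
    have hy1 : y < 1 := DeltaHAux.rho_lt_one h₃ h₂
    -- key inequality r (1 + xy) ≤ x + y
    have hkey : r * (1 + x * y) ≤ x + y := by
      set A : ℍ[ℝ] := (q₁ - q₃) * (1 - star q₃ * q₁)⁻¹ with hAdef
      set B : ℍ[ℝ] := (q₂ - q₃) * (1 - star q₃ * q₂)⁻¹ with hBdef
      have hinv : r = rhoH A B := DeltaHAux.mobius_invariance h₁ h₂ h₃
      have hnA : ‖A‖ = x := by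
        rw [hAdef, norm_mul, norm_inv, hxdef, DeltaHAux.rho_symm q₁ q₃]
        rw [rhoH, norm_sub_rev]
      have hnB : ‖B‖ = y := by
        rw [hBdef, norm_mul, norm_inv, hydef]
        rw [rhoH, norm_sub_rev]
      have hA1 : ‖A‖ < 1 := by rw [hnA]; exact hx1
      have hB1 : ‖B‖ < 1 := by rw [hnB]; exact hy1
      have h := DeltaHAux.key_ineq hA1 hB1
      rw [hnA, hnB] at h
      have hden : (0:ℝ) < 1 + x * y := by nlinarith
      have : rhoH A B ≤ (x + y) / (1 + x * y) := h
      rw [← hinv] at this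
      rw [div_eq_mul_inv] at this
      calc r * (1 + x * y) ≤ (x + y) * (1 + x * y)⁻¹ * (1 + x * y) := by
            apply mul_le_mul_of_nonneg_right this hden.le
        _ = x + y := by field_simp
    -- now the real-analysis part
    have hXpos : (0:ℝ) < (1 + x) / (1 - x) := by
      apply div_pos (by linarith) (by linarith)
    have hYpos : (0:ℝ) < (1 + y) / (1 - y) := by
      apply div_pos (by linarith) (by linarith)
    have hRpos : (0:ℝ) < (1 + r) / (1 - r) := by
      apply div_pos (by linarith) (by linarith)
    have hle : (1 + r) / (1 - r) ≤ (1 + x) / (1 - x) * ((1 + y) / (1 - y)) := by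
      rw [div_mul_div_comm, div_le_div_iff₀ (by linarith) (by nlinarith)]
      nlinarith [hkey, mul_nonneg hx0 hy0]
    have hlog := Real.log_le_log hRpos hle
    rw [Real.log_mul (by positivity) (by positivity)] at hlog
    unfold deltaH
    rw [← hrdef, ← hxdef, ← hydef]
    linarith
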